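/- If 1/2 ≤ ρ < 1 and 0 < δ < 1/2, then lim_{m→∞} sup_{k ≥ 1} (k m^{ρ-1} + k^{1-δ}) / (m^{1/2} g(m,k)) = 0, where g(m,k) = m^{1/2}(1+k/m)(k/(k+m))^γ with 0 ≤ γ < 1/2. -/

import Mathlib

open Filter

/-- Key pointwise bound. -/
lemma sup_drift_key (γ ρ δ : ℝ) (hγ0 : 0 ≤ γ) (hγ : γ < 1/2)
    (hρ2 : ρ < 1) (hδ1 : 0 < δ) (hδ2 : δ < 1/2)
    (M K : ℝ) (hM : 0 < M) (hK : 0 < K) :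
    (K * M ^ (ρ - 1) + K ^ (1 - δ)) /
      (Real.sqrt M * (Real.sqrt M * (1 + K / M) * (K / (K + M)) ^ γ)) ≤
      M ^ (ρ - 1) + M ^ (-δ) := by
  have hMK : 0 < K + M := by linarith
  have hr : 0 < K / (K + M) := div_pos hK hMK
  have hr1 : K / (K + M) ≤ 1 := div_le_one_of_le₀ (by linarith) hMK.le
  have hden : Real.sqrt M * (Real.sqrt M * (1 + K / M) * (K / (K + M)) ^ γ)
      = (K + M) * (K / (K + M)) ^ γ := by
    rw [show Real.sqrt M * (Real.sqrt M * (1 + K / M) * (K / (K + M)) ^ γ)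
        = (Real.sqrt M * Real.sqrt M * (1 + K / M)) * (K / (K + M)) ^ γ by ring,
      Real.mul_self_sqrt hM.le]
    congr 1
    field_simp
    ring
  rw [hden]
  have hhalf : (K / (K + M)) ^ ((1:ℝ)/2) ≤ (K / (K + M)) ^ γ :=
    Real.rpow_le_rpow_of_exponent_ge hr hr1 hγ.le
  have hsplit : (K / (K + M)) ^ ((1:ℝ)/2) = K ^ ((1:ℝ)/2) / (K + M) ^ ((1:ℝ)/2) :=
    Real.div_rpow hK.le hMK.le _
  have hKh : 0 < K ^ ((1:ℝ)/2) := Real.rpow_pos_of_pos hK _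
  have hMKh : 0 < (K + M) ^ ((1:ℝ)/2) := Real.rpow_pos_of_pos hMK _
  have hDD : (K + M) ^ ((1:ℝ)/2) * K ^ ((1:ℝ)/2) ≤ (K + M) * (K / (K + M)) ^ γ := by
    calc (K + M) ^ ((1:ℝ)/2) * K ^ ((1:ℝ)/2)
        = (K + M) * ((K / (K + M)) ^ ((1:ℝ)/2)) := by
          rw [hsplit]
          rw [show (K + M) * (K ^ ((1:ℝ)/2) / (K + M) ^ ((1:ℝ)/2))
            = (K + M) / (K + M) ^ ((1:ℝ)/2) * K ^ ((1:ℝ)/2) by ring]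
          congr 1
          rw [eq_div_iff hMKh.ne', ← Real.rpow_add hMK]
          norm_num
      _ ≤ (K + M) * (K / (K + M)) ^ γ := by
          exact mul_le_mul_of_nonneg_left hhalf hMK.le
  have hnum : 0 ≤ K * M ^ (ρ - 1) + K ^ (1 - δ) := by positivity
  calc (K * M ^ (ρ - 1) + K ^ (1 - δ)) / ((K + M) * (K / (K + M)) ^ γ)
      ≤ (K * M ^ (ρ - 1) + K ^ (1 - δ)) / ((K + M) ^ ((1:ℝ)/2) * K ^ ((1:ℝ)/2)) := by
        gcongr
    _ = K * M ^ (ρ - 1) / ((K + M) ^ ((1:ℝ)/2) * K ^ ((1:ℝ)/2))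
        + K ^ (1 - δ) / ((K + M) ^ ((1:ℝ)/2) * K ^ ((1:ℝ)/2)) := add_div _ _ _
    _ ≤ M ^ (ρ - 1) + M ^ (-δ) := by
        apply add_le_add
        · rw [div_le_iff₀ (mul_pos hMKh hKh)]
          have hKK : K ^ ((1:ℝ)/2) * K ^ ((1:ℝ)/2) = K := by
            rw [← Real.rpow_add hK]; norm_num
          have hle : K ^ ((1:ℝ)/2) ≤ (K + M) ^ ((1:ℝ)/2) :=
            Real.rpow_le_rpow hK.le (by linarith) (by norm_num)
          have hMρ : 0 ≤ M ^ (ρ - 1) := Real.rpow_nonneg hM.le _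
          calc K * M ^ (ρ - 1) = M ^ (ρ - 1) * (K ^ ((1:ℝ)/2) * K ^ ((1:ℝ)/2)) := by
                rw [hKK]; ring
            _ ≤ M ^ (ρ - 1) * ((K + M) ^ ((1:ℝ)/2) * K ^ ((1:ℝ)/2)) := by
                apply mul_le_mul_of_nonneg_left _ hMρ
                exact mul_le_mul_of_nonneg_right hle hKh.le
        · have hsplitK : K ^ (1 - δ) = K ^ ((1:ℝ)/2) * K ^ ((1:ℝ)/2 - δ) := by
            rw [← Real.rpow_add hK]; ring_nf
          rw [hsplitK, show (K + M) ^ ((1:ℝ)/2) * K ^ ((1:ℝ)/2)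
              = K ^ ((1:ℝ)/2) * (K + M) ^ ((1:ℝ)/2) by ring,
            mul_div_mul_left _ _ hKh.ne']
          have h1 : K ^ ((1:ℝ)/2 - δ) ≤ (K + M) ^ ((1:ℝ)/2 - δ) :=
            Real.rpow_le_rpow hK.le (by linarith) (by linarith)
          calc K ^ ((1:ℝ)/2 - δ) / (K + M) ^ ((1:ℝ)/2)
              ≤ (K + M) ^ ((1:ℝ)/2 - δ) / (K + M) ^ ((1:ℝ)/2) := by gcongr
            _ = (K + M) ^ (-δ) := by
                rw [← Real.rpow_sub hMK]; ring_nf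
            _ ≤ M ^ (-δ) := by
                apply Real.rpow_le_rpow_of_nonpos hM (by linarith) (by linarith)

/-- If `1/2 ≤ ρ < 1` and `0 < δ < 1/2`, then
`lim_{m→∞} sup_{k ≥ 1} (k m^{ρ-1} + k^{1-δ}) / (m^{1/2} g(m,k)) = 0`,
where `g(m,k) = m^{1/2}(1+k/m)(k/(k+m))^γ` with `0 ≤ γ < 1/2`. -/
theorem sup_drift_div_sqrtm_g_tendsto_zero
    (γ ρ δ : ℝ) (hγ0 : 0 ≤ γ) (hγ : γ < 1/2)
    (hρ1 : 1/2 ≤ ρ) (hρ2 : ρ < 1) (hδ1 : 0 < δ) (hδ2 : δ < 1/2) :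
    Tendsto (fun m : ℕ =>
      ⨆ k : {k : ℕ // 1 ≤ k},
        ((k.1 : ℝ) * (m : ℝ) ^ (ρ - 1) + (k.1 : ℝ) ^ (1 - δ)) /
          (Real.sqrt m *
            (Real.sqrt m * (1 + (k.1 : ℝ) / m) * ((k.1 : ℝ) / ((k.1 : ℝ) + m)) ^ γ)))
      atTop (nhds 0) := by
  have hb : Tendsto (fun m : ℕ => (m:ℝ) ^ (ρ - 1) + (m:ℝ) ^ (-δ)) atTop (nhds 0) := by
    have h1 : Tendsto (fun m : ℕ => (m:ℝ) ^ (ρ - 1)) atTop (nhds 0) := by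
      have := (tendsto_rpow_neg_atTop (by linarith : (0:ℝ) < 1 - ρ)).comp
        (tendsto_natCast_atTop_atTop (R := ℝ))
      simpa [Function.comp_def, neg_sub] using this
    have h2 : Tendsto (fun m : ℕ => (m:ℝ) ^ (-δ)) atTop (nhds 0) := by
      have := (tendsto_rpow_neg_atTop hδ1).comp (tendsto_natCast_atTop_atTop (R := ℝ))
      simpa [Function.comp_def] using this
    simpa using h1.add h2
  apply squeeze_zero' ?_ ?_ hb
  · filter_upwards with m
    apply Real.iSup_nonneg
    intro k
    positivity
  · filter_upwards [eventually_ge_atTop 1] with m hm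
    apply ciSup_le
    rintro ⟨k, hk⟩
    exact sup_drift_key γ ρ δ hγ0 hγ hρ2 hδ1 hδ2 (m : ℝ) (k : ℝ)
      (by exact_mod_cast Nat.lt_of_lt_of_le Nat.zero_lt_one hm)
      (by exact_mod_cast Nat.lt_of_lt_of_le Nat.zero_lt_one hk)
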